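/- Let I be a fixed real 3×3 matrix and let Q, P, Ω : ℝ → Matrix (Fin 3) (Fin 3) ℝ with Q and P differentiable and, for all t: Q′(t) = Q(t)·Ω(t), P′(t) = P(t)·Ω(t), Ω(t)ᵀ = −Ω(t), and I·Ω(t) = Q(t)ᵀ·P(t). Then t ↦ I·Ω(t) is differentiable with derivative d/dt (I·Ω(t)) = (I·Ω(t))·Ω(t) − Ω(t)·(I·Ω(t)), i.e. IΩ satisfies the rigid body equation d/dt(IΩ) = [IΩ, Ω]. -/

import Mathlib

open Matrix
attribute [local instance] Matrix.frobeniusNormedAddCommGroup Matrix.frobeniusNormedSpace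

attribute [local instance] Matrix.frobeniusNormedRing Matrix.frobeniusNormedAlgebra

/-- **Rigid body elimination.** If `Q̇ = QΩ`, `Ṗ = PΩ`, `Ωᵀ = −Ω` and
`IΩ = QᵀP`, then the body angular momentum `IΩ` satisfies the Euler rigid
body equation `d/dt (IΩ) = [IΩ, Ω]`. -/
theorem rigid_body_elimination
    (I : Matrix (Fin 3) (Fin 3) ℝ)
    (Q P Ω : ℝ → Matrix (Fin 3) (Fin 3) ℝ)
    (hQ : ∀ t : ℝ, HasDerivAt Q (Q t * Ω t) t)
    (hP : ∀ t : ℝ, HasDerivAt P (P t * Ω t) t)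
    (hskew : ∀ t : ℝ, (Ω t)ᵀ = -Ω t)
    (hmom : ∀ t : ℝ, I * Ω t = (Q t)ᵀ * P t) :
    ∀ t : ℝ,
      HasDerivAt (fun s : ℝ => I * Ω s)
        ((I * Ω t) * Ω t - Ω t * (I * Ω t)) t := by
  intro t
  set L := ((Matrix.transposeLinearEquiv (Fin 3) (Fin 3) ℝ ℝ).toLinearMap).toContinuousLinearMap
    with hL
  have hLval : ∀ A : Matrix (Fin 3) (Fin 3) ℝ, L A = Aᵀ := fun A => rfl
  have hQT : HasDerivAt (fun s => (Q s)ᵀ) ((Q t * Ω t)ᵀ) t := by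
    have := (L.hasFDerivAt (x := Q t)).comp_hasDerivAt t (hQ t)
    exact this
  have hmul : HasDerivAt (fun s => (Q s)ᵀ * P s)
      ((Q t * Ω t)ᵀ * P t + (Q t)ᵀ * (P t * Ω t)) t := hQT.mul (hP t)
  have key : (Q t * Ω t)ᵀ * P t + (Q t)ᵀ * (P t * Ω t)
      = (I * Ω t) * Ω t - Ω t * (I * Ω t) := by
    have h := hmom t
    rw [Matrix.transpose_mul, hskew t,
      show (Q t)ᵀ * (P t * Ω t) = (I * Ω t) * Ω t by rw [← Matrix.mul_assoc, ← h],
      show -Ω t * (Q t)ᵀ * P t = -(Ω t * (I * Ω t)) by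
        rw [Matrix.mul_assoc, ← h]; noncomm_ring]
    noncomm_ring
  have := hmul.congr_deriv key
  exact this.congr_of_eventuallyEq (by filter_upwards with s using (hmom s))
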